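/- Consider the square-shaped dumbbell: for $a, b > 0$ and $0 \le c < a$, define $g(t) = \frac{\int_0^a e^{-y^2/(4t)}\,dy}{\int_c^a e^{-y^2/(4t)}\,dy}\, e^{-(a^2+ab)/t}$ for $t > 0$. Then $g$ is continuous and strictly increasing on $(0,\infty)$, with $\lim_{t\to 0^+} g(t) = 0$ and $\lim_{t\to\infty} g(t) = \frac{a}{a-c}$. Consequently, since $\frac{a}{a-c} > \frac{b}{b+2a}$, there is a unique $t_0 > 0$ with $g(t_0) = \frac{b}{b+2a}$. -/

import Mathlib

open Real Filter MeasureTheory intervalIntegral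

noncomputable def sqII (p q t : ℝ) : ℝ := ∫ y in p..q, Real.exp (-y ^ 2 / (4 * t))

noncomputable def sqHH (q p t : ℝ) : ℝ := ∫ y in p..q, Real.exp ((4 * q ^ 2 - y ^ 2) / (4 * t))

lemma sqII_integrable (p q t : ℝ) :
    IntervalIntegrable (fun y : ℝ => Real.exp (-y ^ 2 / (4 * t))) volume p q :=
  (Real.continuous_exp.comp ((continuous_id.pow 2).neg.div_const (4 * t))).intervalIntegrable _ _

lemma sqHH_integrable (q p t : ℝ) :
    IntervalIntegrable (fun y : ℝ => Real.exp ((4 * q ^ 2 - y ^ 2) / (4 * t))) volume p q :=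
  (Real.continuous_exp.comp ((continuous_const.sub (continuous_id.pow 2)).div_const
    (4 * t))).intervalIntegrable _ _

lemma sqII_pos (p q t : ℝ) (hpq : p < q) : 0 < sqII p q t :=
  intervalIntegral_pos_of_pos (sqII_integrable p q t) (fun x => Real.exp_pos _) hpq

lemma sqHH_pos (q p t : ℝ) (hpq : p < q) : 0 < sqHH q p t :=
  intervalIntegral_pos_of_pos (sqHH_integrable q p t) (fun x => Real.exp_pos _) hpq

lemma sqII_cont (p q : ℝ) : ContinuousOn (sqII p q) (Set.Ioi 0) := by
  intro t₀ ht₀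
  have ht₀' : (0:ℝ) < t₀ := ht₀
  apply ContinuousAt.continuousWithinAt
  have ht2 : (0:ℝ) < t₀ / 2 := by linarith
  have hcont : Continuous fun t : ℝ => ∫ y in p..q, Real.exp (-y ^ 2 / (4 * max t (t₀ / 2))) := by
    apply intervalIntegral.continuous_parametric_intervalIntegral_of_continuous'
      (f := fun t y => Real.exp (-y ^ 2 / (4 * max t (t₀ / 2))))
    show Continuous fun r : ℝ × ℝ => Real.exp (-r.2 ^ 2 / (4 * max r.1 (t₀ / 2)))
    refine Real.continuous_exp.comp (Continuous.div ?_ ?_ ?_)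
    · exact (continuous_snd.pow 2).neg
    · exact continuous_const.mul (continuous_fst.max continuous_const)
    · intro r
      have : (0:ℝ) < max r.1 (t₀ / 2) := lt_max_of_lt_right ht2
      positivity
  apply hcont.continuousAt.congr
  filter_upwards [eventually_gt_nhds (show t₀ / 2 < t₀ by linarith)] with t ht
  simp only [sqII, max_eq_left ht.le]

lemma sqII_le (p q t : ℝ) (hpq : p ≤ q) (ht : 0 < t) : sqII p q t ≤ q - p := by
  have h := intervalIntegral.integral_mono_on (f := fun y : ℝ => Real.exp (-y ^ 2 / (4 * t)))
    (g := fun _ : ℝ => (1:ℝ)) (μ := volume) hpq (sqII_integrable p q t)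
    (intervalIntegrable_const) ?_
  · simpa [sqII] using h
  · intro x _
    rw [Real.exp_le_one_iff]
    have hx : (0:ℝ) ≤ x ^ 2 := sq_nonneg x
    have h4 : (0:ℝ) < 4 * t := by linarith
    have : (0:ℝ) ≤ x ^ 2 / (4 * t) := div_nonneg hx h4.le
    linarith [neg_div (4*t) (x^2)]

lemma sqII_ge (p q t : ℝ) (hp : 0 ≤ p) (hpq : p ≤ q) (ht : 0 < t) :
    (q - p) * Real.exp (-q ^ 2 / (4 * t)) ≤ sqII p q t := by
  have h := intervalIntegral.integral_mono_on (f := fun _ : ℝ => Real.exp (-q ^ 2 / (4 * t)))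
    (g := fun y : ℝ => Real.exp (-y ^ 2 / (4 * t))) (μ := volume) hpq
    (intervalIntegrable_const) (sqII_integrable p q t) ?_
  · simpa [sqII, smul_eq_mul] using h
  · intro x hx
    apply Real.exp_le_exp.2
    have hx2 : x ^ 2 ≤ q ^ 2 := by
      have h0x : 0 ≤ x := le_trans hp hx.1
      nlinarith [hx.2]
    have h4 : (0:ℝ) < 4 * t := by linarith
    rw [neg_div, neg_div, neg_le_neg_iff]
    gcongr

lemma sqII_strictMono (p q : ℝ) (hp : 0 ≤ p) (hpq : p < q) {s t : ℝ} (hs : 0 < s) (hst : s < t) :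
    sqII p q s < sqII p q t := by
  have ht : 0 < t := hs.trans hst
  have hsub : 0 < ∫ y in p..q,
      (Real.exp (-y ^ 2 / (4 * t)) - Real.exp (-y ^ 2 / (4 * s))) := by
    apply intervalIntegral_pos_of_pos_on
      ((sqII_integrable p q t).sub (sqII_integrable p q s)) _ hpq
    intro x hx
    have hx0 : 0 < x := lt_of_le_of_lt hp hx.1
    have hx2 : 0 < x ^ 2 := by positivity
    have : x ^ 2 / (4 * t) < x ^ 2 / (4 * s) :=
      div_lt_div_of_pos_left hx2 (by linarith) (by linarith)
    have := Real.exp_lt_exp.2 (show -x ^ 2 / (4 * s) < -x ^ 2 / (4 * t) by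
      rw [neg_div, neg_div]; linarith)
    linarith
  have := intervalIntegral.integral_sub (sqII_integrable p q t) (sqII_integrable p q s)
  unfold sqII
  rw [this] at hsub
  linarith

lemma sqHH_strictAnti (q p : ℝ) (hp : 0 ≤ p) (hpq : p < q) {s t : ℝ} (hs : 0 < s) (hst : s < t) :
    sqHH q p t < sqHH q p s := by
  have ht : 0 < t := hs.trans hst
  have hsub : 0 < ∫ y in p..q,
      (Real.exp ((4 * q ^ 2 - y ^ 2) / (4 * s)) - Real.exp ((4 * q ^ 2 - y ^ 2) / (4 * t))) := by
    apply intervalIntegral_pos_of_pos_on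
      ((sqHH_integrable q p s).sub (sqHH_integrable q p t)) _ hpq
    intro x hx
    have hx0 : 0 < x := lt_of_le_of_lt hp hx.1
    have hq : 0 < q := hx0.trans hx.2
    have hnum : 0 < 4 * q ^ 2 - x ^ 2 := by nlinarith [hx.2]
    have : (4 * q ^ 2 - x ^ 2) / (4 * t) < (4 * q ^ 2 - x ^ 2) / (4 * s) :=
      div_lt_div_of_pos_left hnum (by linarith) (by linarith)
    have := Real.exp_lt_exp.2 this
    linarith
  have := intervalIntegral.integral_sub (sqHH_integrable q p s) (sqHH_integrable q p t)
  unfold sqHH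
  rw [this] at hsub
  linarith

lemma sqHH_eq (q p t : ℝ) (ht : 0 < t) :
    sqHH q p t = sqII p q t * Real.exp (q ^ 2 / t) := by
  unfold sqHH sqII
  rw [← intervalIntegral.integral_mul_const]
  apply intervalIntegral.integral_congr
  intro x _
  show Real.exp ((4 * q ^ 2 - x ^ 2) / (4 * t)) = Real.exp (-x ^ 2 / (4 * t)) * Real.exp (q ^ 2 / t)
  rw [← Real.exp_add]
  congr 1
  field_simp
  ring

lemma exp_div_tendsto_atTop (k : ℝ) :
    Tendsto (fun t : ℝ => Real.exp (k / t)) atTop (nhds 1) := by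
  have h : Tendsto (fun t : ℝ => k / t) atTop (nhds 0) := by
    simpa [div_eq_mul_inv] using tendsto_inv_atTop_zero.const_mul k
  simpa [Function.comp_def] using (Real.continuous_exp.tendsto 0).comp h

lemma sqII_tendsto_atTop (p q : ℝ) (hp : 0 ≤ p) (hpq : p ≤ q) :
    Tendsto (sqII p q) atTop (nhds (q - p)) := by
  have hlow : Tendsto (fun t : ℝ => (q - p) * Real.exp (-q ^ 2 / (4 * t))) atTop
      (nhds (q - p)) := by
    have := (exp_div_tendsto_atTop (-q ^ 2 / 4)).const_mul (q - p)
    simpa [div_div, mul_one] using this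
  refine tendsto_of_tendsto_of_tendsto_of_le_of_le' hlow tendsto_const_nhds ?_ ?_
  · filter_upwards [eventually_gt_atTop (0:ℝ)] with t ht using sqII_ge p q t hp hpq ht
  · filter_upwards [eventually_gt_atTop (0:ℝ)] with t ht using sqII_le p q t hpq ht

/-- Properties of the function `g` governing the square dumbbell: continuity,
strict monotonicity, limits at `0⁺` and `∞`, and the unique collapse time `t₀`. -/
theorem square_dumbbell_g (a b c : ℝ) (ha : 0 < a) (hb : 0 < b) (hc : 0 ≤ c) (hca : c < a)
    (g : ℝ → ℝ)
    (hg : ∀ t : ℝ, 0 < t →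
      g t = (∫ y in (0:ℝ)..a, exp (-y ^ 2 / (4 * t))) /
            (∫ y in c..a, exp (-y ^ 2 / (4 * t))) * exp (-(a ^ 2 + a * b) / t)) :
    ContinuousOn g (Set.Ioi 0) ∧ StrictMonoOn g (Set.Ioi 0) ∧
    Tendsto g (nhdsWithin 0 (Set.Ioi 0)) (nhds 0) ∧
    Tendsto g atTop (nhds (a / (a - c))) ∧
    b / (b + 2 * a) < a / (a - c) ∧
    (∃! t₀ : ℝ, 0 < t₀ ∧ g t₀ = b / (b + 2 * a)) := by
  have hac : 0 < a - c := by linarith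
  -- rewrite hg in terms of sqII
  have hg' : ∀ t : ℝ, 0 < t →
      g t = sqII 0 a t / sqII c a t * Real.exp (-(a ^ 2 + a * b) / t) := fun t ht => hg t ht
  -- alternative form using sqHH
  have hg2 : ∀ t : ℝ, 0 < t →
      g t = sqII 0 a t / sqHH a c t * Real.exp (-(a * b) / t) := by
    intro t ht
    rw [hg' t ht, sqHH_eq a c t ht]
    have hIpos : 0 < sqII c a t := sqII_pos c a t hca
    have hE : Real.exp (-(a ^ 2 + a * b) / t) =
        Real.exp (-(a * b) / t) / Real.exp (a ^ 2 / t) := by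
      rw [← Real.exp_sub]; congr 1; ring
    rw [hE]
    field_simp
  -- continuity
  have hcont : ContinuousOn g (Set.Ioi 0) := by
    have h1 : ContinuousOn (fun t => sqII 0 a t / sqII c a t * Real.exp (-(a ^ 2 + a * b) / t))
        (Set.Ioi 0) := by
      apply ContinuousOn.mul
      · exact (sqII_cont 0 a).div (sqII_cont c a) (fun t _ => (sqII_pos c a t hca).ne')
      · exact Real.continuous_exp.comp_continuousOn
          (continuousOn_const.div continuousOn_id (fun t ht => ne_of_gt ht))
    exact h1.congr (fun t ht => hg' t ht)
  -- strict monotonicity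
  have hmono : StrictMonoOn g (Set.Ioi 0) := by
    intro s hs t ht hst
    have hs' : (0:ℝ) < s := hs
    have ht' : (0:ℝ) < t := ht
    rw [hg2 s hs', hg2 t ht']
    have hFt := sqII_pos 0 a t ha
    have hHs := sqHH_pos a c s hca
    have hHt := sqHH_pos a c t hca
    have hF : sqII 0 a s < sqII 0 a t := sqII_strictMono 0 a le_rfl ha hs' hst
    have hH : sqHH a c t < sqHH a c s := sqHH_strictAnti a c hc hca hs' hst
    have h1 : sqII 0 a s / sqHH a c s < sqII 0 a t / sqHH a c t :=
      div_lt_div₀ hF hH.le hFt.le hHt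
    have hexp : Real.exp (-(a * b) / s) < Real.exp (-(a * b) / t) := by
      apply Real.exp_lt_exp.2
      rw [neg_div, neg_div, neg_lt_neg_iff]
      exact div_lt_div_of_pos_left (by positivity) hs' hst
    exact mul_lt_mul' h1.le hexp (Real.exp_pos _).le (div_pos hFt hHt)
  -- limit at 0+
  have hlim0 : Tendsto g (nhdsWithin 0 (Set.Ioi 0)) (nhds 0) := by
    apply squeeze_zero'
      (g := fun t => a / (a - c) * Real.exp (-(3 * a ^ 2 / 4 + a * b) / t))
    · filter_upwards [eventually_mem_nhdsWithin] with t ht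
      have ht' : (0:ℝ) < t := ht
      rw [hg' t ht']
      have h1 := sqII_pos 0 a t ha
      have h2 := sqII_pos c a t hca
      positivity
    · filter_upwards [eventually_mem_nhdsWithin] with t ht
      have ht' : (0:ℝ) < t := ht
      rw [hg' t ht']
      have hFle : sqII 0 a t ≤ a := by simpa using sqII_le 0 a t ha.le ht'
      have hGge : (a - c) * Real.exp (-a ^ 2 / (4 * t)) ≤ sqII c a t :=
        sqII_ge c a t hc hca.le ht'
      have hGpos : 0 < (a - c) * Real.exp (-a ^ 2 / (4 * t)) := by positivity
      have h1 : sqII 0 a t / sqII c a t ≤ a / ((a - c) * Real.exp (-a ^ 2 / (4 * t))) :=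
        div_le_div₀ ha.le hFle hGpos hGge
      have h2 := mul_le_mul_of_nonneg_right h1 (Real.exp_pos (-(a ^ 2 + a * b) / t)).le
      refine h2.trans (le_of_eq ?_)
      rw [show -(3 * a ^ 2 / 4 + a * b) / t = -(a ^ 2 + a * b) / t - -a ^ 2 / (4 * t) by
        field_simp; ring]
      rw [Real.exp_sub]
      have hE1 := Real.exp_ne_zero (-a ^ 2 / (4 * t))
      field_simp
    · have h1 : Tendsto (fun t : ℝ => -(3 * a ^ 2 / 4 + a * b) / t)
          (nhdsWithin 0 (Set.Ioi 0)) atBot := by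
        have h2 : Tendsto (fun t : ℝ => -(3 * a ^ 2 / 4 + a * b) * t⁻¹)
            (nhdsWithin 0 (Set.Ioi 0)) atBot :=
          (tendsto_const_mul_atBot_of_neg (by nlinarith)).2 tendsto_inv_nhdsGT_zero
        simpa [div_eq_mul_inv] using h2
      have h3 := Real.tendsto_exp_atBot.comp h1
      have h4 := h3.const_mul (a / (a - c))
      simpa using h4
  -- limit at infinity
  have hlimT : Tendsto g atTop (nhds (a / (a - c))) := by
    have hF := sqII_tendsto_atTop 0 a le_rfl ha.le
    have hG := sqII_tendsto_atTop c a hc hca.le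
    have hE : Tendsto (fun t : ℝ => Real.exp (-(a ^ 2 + a * b) / t)) atTop (nhds 1) :=
      exp_div_tendsto_atTop (-(a ^ 2 + a * b))
    have hmain := (hF.div hG hac.ne').mul hE
    have hmain' : Tendsto
        (fun t => sqII 0 a t / sqII c a t * Real.exp (-(a ^ 2 + a * b) / t)) atTop
        (nhds (a / (a - c))) := by
      simpa using hmain
    apply hmain'.congr'
    filter_upwards [eventually_gt_atTop (0:ℝ)] with t ht
    exact (hg' t ht).symm
  -- the strict inequality
  have hblt : b / (b + 2 * a) < a / (a - c) := by
    have h1 : b / (b + 2 * a) < 1 := by rw [div_lt_one (by linarith)]; linarith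
    have h2 : (1:ℝ) ≤ a / (a - c) := by rw [le_div_iff₀ hac]; linarith
    linarith
  refine ⟨hcont, hmono, hlim0, hlimT, hblt, ?_⟩
  set r := b / (b + 2 * a) with hr
  have hr0 : 0 < r := by positivity
  obtain ⟨t₁, ht₁r, ht₁mem⟩ :=
    ((hlim0.eventually_lt_const hr0).and eventually_mem_nhdsWithin).exists
  obtain ⟨t₂, ht₂r, ht₂pos⟩ :=
    ((hlimT.eventually_const_lt hblt).and (eventually_gt_atTop (0:ℝ))).exists
  have ht₁pos : (0:ℝ) < t₁ := ht₁mem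
  have h12 : t₁ < t₂ := by
    rcases lt_trichotomy t₁ t₂ with h | h | h
    · exact h
    · exfalso; rw [h] at ht₁r; linarith
    · exfalso
      have := hmono (Set.mem_Ioi.2 ht₂pos) ht₁mem h
      linarith
  have hIcc : Set.Icc t₁ t₂ ⊆ Set.Ioi 0 := fun x hx => lt_of_lt_of_le ht₁pos hx.1
  have hivt := intermediate_value_Icc h12.le (hcont.mono hIcc)
  obtain ⟨t₀, ht₀mem, ht₀eq⟩ := hivt ⟨ht₁r.le, ht₂r.le⟩
  have ht₀pos : 0 < t₀ := lt_of_lt_of_le ht₁pos ht₀mem.1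
  refine ⟨t₀, ⟨ht₀pos, ht₀eq⟩, ?_⟩
  rintro t ⟨htpos, hteq⟩
  exact hmono.injOn (Set.mem_Ioi.2 htpos) (Set.mem_Ioi.2 ht₀pos) (by rw [hteq, ht₀eq])
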